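/- Let $k \ge 2$ be an integer, let $F$ be a $(k+2,k)$-free $3$-uniform hypergraph, and let $S$ be a $k$-maximal $(\ell+1,\ell)$-configuration of $F$ for some $\ell \in [2,k-1]$. Define the graph $H$ with vertex set $V(F) \setminus V(S)$ and edge set $\{T \in \binom{V(H)}{2} : \exists e \in E(F), |e \cap V(S)| = 1, e \setminus V(S) = T\}$. Then $H$ is a forest, each of whose connected components has at most $k - \ell$ vertices. -/

import Mathlib

open Finset

/-- `S` is an `(ℓ+1, ℓ)`-configuration of `F`: a set of `ℓ` edges of `F`
spanning at most `ℓ + 1` vertices. -/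
def IsConfig {V : Type*} [DecidableEq V] (F S : Finset (Finset V)) (ℓ : ℕ) : Prop :=
  S ⊆ F ∧ S.card = ℓ ∧ (S.sup id).card ≤ ℓ + 1

/-- The auxiliary graph `H` on `V(F) \ W`: vertices outside `W` are joined when some
edge of `F` meets `W` in exactly one vertex and has the pair as its part outside `W`. -/
def pendantGraph {V : Type*} [DecidableEq V] (F : Finset (Finset V)) (W : Finset V) :
    SimpleGraph V where
  Adj x y := x ≠ y ∧ x ∉ W ∧ y ∉ W ∧ ∃ e ∈ F, (e ∩ W).card = 1 ∧ e \ W = {x, y}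
  symm := by
    constructor
    rintro x y ⟨hxy, hx, hy, e, he, h1, h2⟩
    exact ⟨hxy.symm, hy, hx, e, he, h1, by rw [h2, Finset.pair_comm]⟩
  loopless := by constructor; rintro x ⟨hxx, -⟩; exact hxx rfl

lemma pendantGraph_adj {V : Type*} [DecidableEq V] {F : Finset (Finset V)} {W : Finset V}
    {x y : V} : (pendantGraph F W).Adj x y ↔
      x ≠ y ∧ x ∉ W ∧ y ∉ W ∧ ∃ e ∈ F, (e ∩ W).card = 1 ∧ e \ W = {x, y} := Iff.rfl

lemma pair_eq_sym2 {V : Type*} [DecidableEq V] {a b c d : V} (hab : a ≠ b)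
    (h : ({a, b} : Finset V) = {c, d}) : s(a, b) = s(c, d) := by
  have ha : a ∈ ({c, d} : Finset V) := h ▸ (by simp)
  have hb : b ∈ ({c, d} : Finset V) := h ▸ (by simp)
  simp only [Finset.mem_insert, Finset.mem_singleton] at ha hb
  rcases ha with rfl | rfl <;> rcases hb with rfl | rfl
  · exact absurd rfl hab
  · rfl
  · exact Sym2.eq_swap
  · exact absurd rfl hab

/-- If `F` is a `(k+2,k)`-free 3-uniform hypergraph and `S` is a
`k`-maximal `(ℓ+1,ℓ)`-configuration with `ℓ ∈ [2, k-1]`, then the pendant graph `H`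
on `V(F) \ V(S)` is a forest whose components have at most `k - ℓ` vertices. -/
theorem pendantGraph_isForest_small_components {V : Type*} [Fintype V] [DecidableEq V]
    (k ℓ : ℕ) (hk : 2 ≤ k) (hℓ2 : 2 ≤ ℓ) (hℓk : ℓ ≤ k - 1)
    (F : Finset (Finset V)) (h3 : ∀ e ∈ F, e.card = 3)
    (hfree : ∀ T ⊆ F, T.card = k → k + 2 < (T.sup id).card)
    (S : Finset (Finset V)) (hconf : IsConfig F S ℓ)
    (hmax : ¬ ∃ S' ℓ', IsConfig F S' ℓ' ∧ S ⊆ S' ∧ ℓ < ℓ' ∧ ℓ' ≤ k - 1) :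
    (pendantGraph F (S.sup id)).IsAcyclic ∧
      ∀ x : V, {y | (pendantGraph F (S.sup id)).Reachable x y}.ncard ≤ k - ℓ := by
  classical
  obtain ⟨hSF, hScard, hWcard⟩ := hconf
  set W := S.sup id with hW
  set H := pendantGraph F W with hH
  have hℓk' : ℓ + 1 ≤ k := by omega
  -- counting lemma
  have count : ∀ (A : Finset V) (P : Finset (Finset V)), P ⊆ F →
      (∀ e ∈ P, (e ∩ W).card = 1 ∧ e \ W ⊆ A) →
      S ∪ P ⊆ F ∧ (S ∪ P).card = ℓ + P.card ∧ ((S ∪ P).sup id).card ≤ ℓ + 1 + A.card := by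
    intro A P hPF hP
    have hSW : ∀ e ∈ S, e ⊆ W := fun e he => Finset.le_sup (f := id) he
    have hdisj : Disjoint S P := by
      rw [Finset.disjoint_left]
      intro e heS heP
      obtain ⟨h1, -⟩ := hP e heP
      have he3 : e.card = 3 := h3 e (hSF heS)
      have hinter : e ∩ W = e := Finset.inter_eq_left.mpr (hSW e heS)
      rw [hinter, he3] at h1
      omega
    refine ⟨Finset.union_subset hSF hPF, ?_, ?_⟩
    · rw [Finset.card_union_of_disjoint hdisj, hScard]
    · have hsub : (S ∪ P).sup id ≤ W ∪ A := by
        apply Finset.sup_le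
        intro e he
        simp only [id_eq, Finset.le_iff_subset]
        rcases Finset.mem_union.mp he with h | h
        · exact fun v hv => Finset.mem_union_left _ (hSW e h hv)
        · intro v hv
          by_cases hvW : v ∈ W
          · exact Finset.mem_union_left _ hvW
          · exact Finset.mem_union_right _ ((hP e h).2 (Finset.mem_sdiff.mpr ⟨hv, hvW⟩))
      calc ((S ∪ P).sup id).card ≤ (W ∪ A).card := Finset.card_le_card (Finset.le_iff_subset.mp hsub)
        _ ≤ W.card + A.card := Finset.card_union_le _ _
        _ ≤ ℓ + 1 + A.card := by omega
  -- growing a tree inside a component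
  have grow : ∀ (x : V), x ∉ W → ∀ t : ℕ, t + 1 ≤ {y | H.Reachable x y}.ncard →
      ∃ (A : Finset V) (P : Finset (Finset V)), A.card = t + 1 ∧ P.card = t ∧ P ⊆ F ∧
        x ∈ A ∧ (↑A : Set V) ⊆ {y | H.Reachable x y} ∧
        ∀ e ∈ P, (e ∩ W).card = 1 ∧ e \ W ⊆ A := by
    intro x hxW t
    induction t with
    | zero =>
      intro _
      refine ⟨{x}, ∅, ?_, ?_, ?_, ?_, ?_, ?_⟩
      · exact Finset.card_singleton x
      · exact Finset.card_empty
      · exact Finset.empty_subset _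
      · exact Finset.mem_singleton_self x
      · intro z hz
        simp only [Finset.coe_singleton, Set.mem_singleton_iff] at hz
        subst hz
        exact SimpleGraph.Reachable.refl _
      · intro e he
        exact absurd he (Finset.notMem_empty e)
    | succ t ih =>
      intro hcard
      obtain ⟨A, P, hA, hPc, hPF, hxA, hAr, hP⟩ := ih (by omega)
      have hns : ¬ ({y | H.Reachable x y} ⊆ ↑A) := by
        intro hsub
        have := Set.ncard_le_ncard hsub A.finite_toSet
        rw [Set.ncard_coe_finset, hA] at this
        omega
      obtain ⟨y, hyr, hyA⟩ := Set.not_subset.mp hns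
      obtain ⟨p⟩ := hyr
      obtain ⟨d, hd, hdf, hds⟩ := p.exists_boundary_dart ↑A hxA hyA
      obtain ⟨hne, haW, hbW, e, heF, he1, he2⟩ := d.adj
      have hbA : d.snd ∉ A := fun h => hds (Finset.mem_coe.mpr h)
      have heP : e ∉ P := by
        intro heP
        have hmem : d.snd ∈ e \ W := by rw [he2]; simp
        exact hbA ((hP e heP).2 hmem)
      refine ⟨insert d.snd A, insert e P, ?_, ?_, Finset.insert_subset heF hPF,
        Finset.mem_insert_of_mem hxA, ?_, ?_⟩
      · rw [Finset.card_insert_of_notMem hbA, hA]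
      · rw [Finset.card_insert_of_notMem heP, hPc]
      · intro z hz
        rcases Finset.mem_insert.mp (Finset.mem_coe.mp hz) with rfl | hzA
        · exact Set.mem_setOf.mpr ((hAr hdf).trans d.adj.reachable)
        · exact hAr hzA
      · intro e' he'
        rcases Finset.mem_insert.mp he' with rfl | he'P
        · refine ⟨he1, ?_⟩
          rw [he2]
          intro v hv
          rcases Finset.mem_insert.mp hv with rfl | hv
          · exact Finset.mem_insert_of_mem hdf
          · simp only [Finset.mem_singleton] at hv
            subst hv
            exact Finset.mem_insert_self _ _
        · exact ⟨(hP e' he'P).1, ((hP e' he'P).2).trans (Finset.subset_insert _ _)⟩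
  -- component bound
  have comp : ∀ x : V, {y | H.Reachable x y}.ncard ≤ k - ℓ := by
    intro x
    by_contra hbig
    push_neg at hbig
    have hxW : x ∉ W := by
      obtain ⟨a, b, ha, hb, hab⟩ :=
        (Set.one_lt_ncard_iff (s := {y | H.Reachable x y}) (Set.toFinite _)).mp (by omega)
      have hz : ∃ z, z ≠ x ∧ H.Reachable x z := by
        by_cases hax : a = x
        · exact ⟨b, fun h => hab (by rw [hax, h]), hb⟩
        · exact ⟨a, hax, ha⟩
      obtain ⟨z, hzx, hzr⟩ := hz
      obtain ⟨p⟩ := hzr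
      cases p with
      | nil => exact absurd rfl hzx
      | cons h q => exact h.2.1
    obtain ⟨A, P, hAcard, hPcard, hPF, -, -, hP⟩ := grow x hxW (k - ℓ) (by omega)
    obtain ⟨hTF, hTcard, hTsup⟩ := count A P hPF hP
    have hfr := hfree (S ∪ P) hTF (by rw [hTcard, hPcard]; omega)
    rw [hAcard] at hTsup
    omega
  refine ⟨?_, comp⟩
  -- acyclicity
  intro x c hc
  have hm3 := hc.three_le_length
  have hxt : x ∈ c.support.tail := by
    have hlast : c.support.getLast c.support_ne_nil = x := c.getLast_support
    have htne : c.support.tail ≠ [] := by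
      have := c.length_support
      intro h
      have := List.length_tail (l := c.support)
      rw [h] at this
      simp at this
      omega
    have heq : c.support.tail.getLast htne = c.support.getLast c.support_ne_nil :=
      List.getLast_tail htne
    have hmem : c.support.tail.getLast htne ∈ c.support.tail := List.getLast_mem htne
    have hx : c.support.tail.getLast htne = x := heq.trans hlast
    rwa [hx] at hmem
  set A := c.support.tail.toFinset with hAdef
  have hAcard : A.card = c.length := by
    rw [hAdef, List.toFinset_card_of_nodup hc.support_nodup]
    have := c.length_support
    have := List.length_tail (l := c.support)
    omega
  have hsupmem : ∀ v ∈ c.support, v ∈ A := by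
    intro v hv
    rcases (SimpleGraph.Walk.mem_support_iff (p := c)).mp hv with rfl | h
    · exact List.mem_toFinset.mpr hxt
    · exact List.mem_toFinset.mpr h
  have hreach : ∀ v ∈ c.support, H.Reachable x v := fun v hv => ⟨c.takeUntil v hv⟩
  have hmn : c.length ≤ {y | H.Reachable x y}.ncard := by
    rw [← hAcard, ← Set.ncard_coe_finset]
    apply Set.ncard_le_ncard _ (Set.toFinite _)
    intro v hv
    exact hreach v (List.mem_of_mem_tail (List.mem_toFinset.mp hv))
  have hmk : c.length ≤ k - ℓ := hmn.trans (comp x)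
  -- build the edge set from the darts of the cycle
  have hchoice : ∀ d : H.Dart, ∃ e, e ∈ F ∧ (e ∩ W).card = 1 ∧ e \ W = {d.fst, d.snd} :=
    fun d => d.adj.2.2.2
  choose f hf1 hf2 hf3 using hchoice
  have hedges : c.edges = c.darts.map SimpleGraph.Dart.edge := rfl
  have hdnd : c.darts.Nodup := by
    have := hc.edges_nodup
    rw [hedges] at this
    exact this.of_map _
  have hinj : ∀ d₁ ∈ c.darts, ∀ d₂ ∈ c.darts, f d₁ = f d₂ → d₁ = d₂ := by
    intro d₁ h₁ d₂ h₂ hfe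
    apply List.inj_on_of_nodup_map (hedges ▸ hc.edges_nodup) h₁ h₂
    have e1 := hf3 d₁
    have e2 := hf3 d₂
    rw [hfe, e2] at e1
    exact (pair_eq_sym2 d₂.adj.1 e1).symm
  have hmapnd : (c.darts.map f).Nodup := List.Nodup.map_on hinj hdnd
  set P := (c.darts.map f).toFinset with hPdef
  have hPcard : P.card = c.length := by
    rw [hPdef, List.toFinset_card_of_nodup hmapnd, List.length_map,
      SimpleGraph.Walk.length_darts]
  have hPF : P ⊆ F := by
    intro e he
    rw [hPdef, List.mem_toFinset, List.mem_map] at he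
    obtain ⟨d, -, rfl⟩ := he
    exact hf1 d
  have hPprop : ∀ e ∈ P, (e ∩ W).card = 1 ∧ e \ W ⊆ A := by
    intro e he
    rw [hPdef, List.mem_toFinset, List.mem_map] at he
    obtain ⟨d, hd, rfl⟩ := he
    refine ⟨hf2 d, ?_⟩
    rw [hf3 d]
    intro v hv
    rcases Finset.mem_insert.mp hv with rfl | hv
    · exact hsupmem _ (SimpleGraph.Walk.dart_fst_mem_support_of_mem_darts _ hd)
    · simp only [Finset.mem_singleton] at hv
      subst hv
      exact hsupmem _ (SimpleGraph.Walk.dart_snd_mem_support_of_mem_darts _ hd)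
  obtain ⟨hTF, hTcard, hTsup⟩ := count A P hPF hPprop
  rw [hPcard] at hTcard
  rw [hAcard] at hTsup
  by_cases hcase : ℓ + c.length ≤ k - 1
  · exact hmax ⟨S ∪ P, ℓ + c.length, ⟨hTF, hTcard, by omega⟩,
      Finset.subset_union_left, by omega, hcase⟩
  · have hfr := hfree (S ∪ P) hTF (by omega)
    omega
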